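/- For any fixed k ∈ {1,2,3}, the set of positive integers n for which n² + k is squarefree has positive lower density; in particular, there exists c > 0 such that #{n ≤ X : n² + k squarefree} ≥ c X for all sufficiently large X. -/

import Mathlib

open Finset

namespace SqfEstMain


/-- Elements of a finset of `[1,X]` that are pairwise congruent mod `M` number at most `X/M+1`. -/
lemma card_le_of_mod_eq {S : Finset ℕ} {X M : ℕ}
    (hS : S ⊆ Finset.Icc 1 X) (h : ∀ a ∈ S, ∀ b ∈ S, a % M = b % M) :
    S.card ≤ X / M + 1 := by
  have key : S.card ≤ (Finset.range (X / M + 1)).card := by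
    apply Finset.card_le_card_of_injOn (fun n => n / M)
    · intro a ha
      have h1 : a ≤ X := (Finset.mem_Icc.1 (hS ha)).2
      have h2 : a / M ≤ X / M := Nat.div_le_div_right h1
      simp only [Finset.mem_coe, Finset.mem_range]
      omega
    · intro a ha b hb hab
      have h1 := h a ha b hb
      have h2 := Nat.div_add_mod a M
      have h3 := Nat.div_add_mod b M
      simp only at hab
      rw [hab] at h2
      omega
  simpa using key



lemma dichotomy {p k m n : ℕ} (hp : p.Prime) (hp2 : p ≠ 2) (hk1 : 1 ≤ k) (hk3 : k ≤ 3)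
    (hm4 : m % 4 = 2) (hn4 : n % 4 = 2) (hm : p ^ 2 ∣ m ^ 2 + k) (hn : p ^ 2 ∣ n ^ 2 + k) :
    ((4 * p ^ 2 : ℕ) : ℤ) ∣ (m : ℤ) - n ∨ ((4 * p ^ 2 : ℕ) : ℤ) ∣ (m : ℤ) + n := by
  have hP : Prime (p : ℤ) := Nat.prime_iff_prime_int.mp hp
  have hp3 : 3 ≤ p := by
    have := hp.two_le; omega
  have hmz : ((p : ℤ)) ^ 2 ∣ (m : ℤ) ^ 2 + k := by exact_mod_cast Int.natCast_dvd_natCast.2 hm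
  have hnz : ((p : ℤ)) ^ 2 ∣ (n : ℤ) ^ 2 + k := by exact_mod_cast Int.natCast_dvd_natCast.2 hn
  have h2 : (p : ℤ) ^ 2 ∣ ((m : ℤ) - n) * ((m : ℤ) + n) := by
    have heq : ((m : ℤ) - n) * ((m : ℤ) + n) = ((m : ℤ) ^ 2 + k) - ((n : ℤ) ^ 2 + k) := by ring
    rw [heq]
    exact dvd_sub hmz hnz
  have h2p : ¬ (2 : ℤ) ∣ (p : ℤ) := by
    intro hd
    have : (2 : ℕ) ∣ p := by exact_mod_cast hd
    rcases (Nat.Prime.eq_one_or_self_of_dvd hp 2 this) with h | h <;> omega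
  have hcop2 : IsCoprime (2 : ℤ) ((p : ℤ)) := (Int.prime_two.coprime_iff_not_dvd).2 h2p
  have hcop4 : IsCoprime (4 : ℤ) ((p : ℤ) ^ 2) := by
    have h4 : (4 : ℤ) = 2 ^ 2 := by norm_num
    rw [h4]
    exact hcop2.pow
  by_cases hd1 : (p : ℤ) ∣ (m : ℤ) + n
  · by_cases hd2 : (p : ℤ) ∣ (m : ℤ) - n
    · exfalso
      have hpm2 : (p : ℤ) ∣ 2 * m := by
        have := dvd_add hd1 hd2
        have heq : ((m : ℤ) + n) + ((m : ℤ) - n) = 2 * m := by ring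
        rwa [heq] at this
      have hpm : (p : ℤ) ∣ (m : ℤ) := by
        rcases hP.dvd_or_dvd hpm2 with h | h
        · exfalso
          have := Int.le_of_dvd (by norm_num) h
          have : (3 : ℤ) ≤ p := by exact_mod_cast hp3
          omega
        · exact h
      have hpmn : p ∣ m := by exact_mod_cast hpm
      have hpk : p ∣ k := by
        have h1 : p ∣ m ^ 2 + k := dvd_trans (dvd_pow_self p two_ne_zero) hm
        have h2 : p ∣ m ^ 2 := dvd_pow hpmn two_ne_zero
        exact (Nat.dvd_add_right h2).mp h1
      have hple : p ≤ k := Nat.le_of_dvd (by omega) hpk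
      have hp3' : p = 3 := by omega
      have hk3' : k = 3 := by
        subst hp3'
        omega
      subst hp3' hk3'
      obtain ⟨c, rfl⟩ := hpmn
      have h9 : 9 ∣ 9 * c ^ 2 + 3 := by
        have : (3 * c) ^ 2 + 3 = 9 * c ^ 2 + 3 := by ring
        rw [← this]
        simpa using hm
      omega
    · right
      have hcop : IsCoprime ((p : ℤ) ^ 2) ((m : ℤ) - n) :=
        ((hP.coprime_iff_not_dvd).2 hd2).pow_left
      have hpp : (p : ℤ) ^ 2 ∣ (m : ℤ) + n := hcop.dvd_of_dvd_mul_left h2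
      have h4 : (4 : ℤ) ∣ (m : ℤ) + n := by
        have h4n : (4 : ℕ) ∣ m + n := by omega
        have := Int.natCast_dvd_natCast.2 h4n
        push_cast at this
        exact_mod_cast this
      have := hcop4.mul_dvd h4 hpp
      push_cast
      exact this
  · left
    have hcop : IsCoprime ((p : ℤ) ^ 2) ((m : ℤ) + n) :=
      ((hP.coprime_iff_not_dvd).2 hd1).pow_left
    have hpp : (p : ℤ) ^ 2 ∣ (m : ℤ) - n := hcop.dvd_of_dvd_mul_right h2
    have h4 : (4 : ℤ) ∣ (m : ℤ) - n := by
      have : n ≡ m [MOD 4] := by unfold Nat.ModEq; omega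
      exact (Nat.modEq_iff_dvd).1 this
    have := hcop4.mul_dvd h4 hpp
    push_cast
    exact this

lemma card_Ap_le {X p k : ℕ} (hp : p.Prime) (hp2 : p ≠ 2) (hk1 : 1 ≤ k) (hk3 : k ≤ 3) :
    (((Finset.Icc 1 X).filter (fun n => n % 4 = 2 ∧ p ^ 2 ∣ n ^ 2 + k)).card)
      ≤ 2 * (X / (4 * p ^ 2) + 1) := by
  classical
  set A := (Finset.Icc 1 X).filter (fun n => n % 4 = 2 ∧ p ^ 2 ∣ n ^ 2 + k) with hA
  rcases A.eq_empty_or_nonempty with he | ⟨n₀, hn₀⟩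
  · simp [he]
  · have hn₀' := hn₀
    rw [hA, Finset.mem_filter] at hn₀'
    obtain ⟨hn₀X, hn₀4, hn₀d⟩ := hn₀'
    set M := 4 * p ^ 2 with hM
    set D1 := A.filter (fun n : ℕ => (M : ℤ) ∣ (n : ℤ) - (n₀ : ℤ)) with hD1
    set D2 := A.filter (fun n : ℕ => (M : ℤ) ∣ (n : ℤ) + (n₀ : ℤ)) with hD2
    have hsub : A ⊆ D1 ∪ D2 := by
      intro n hn
      have hn' := hn
      rw [hA, Finset.mem_filter] at hn'
      obtain ⟨hnX, hn4, hnd⟩ := hn'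
      rcases dichotomy hp hp2 hk1 hk3 hn4 hn₀4 hnd hn₀d with h | h
      · exact Finset.mem_union_left _ (Finset.mem_filter.2 ⟨hn, h⟩)
      · exact Finset.mem_union_right _ (Finset.mem_filter.2 ⟨hn, h⟩)
    have hsub1 : D1 ⊆ Finset.Icc 1 X := fun x hx => by
      have := Finset.mem_filter.1 (Finset.filter_subset _ _ hx)
      exact this.1
    have hsub2 : D2 ⊆ Finset.Icc 1 X := fun x hx => by
      have := Finset.mem_filter.1 (Finset.filter_subset _ _ hx)
      exact this.1
    have hc1 : D1.card ≤ X / M + 1 := by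
      apply card_le_of_mod_eq hsub1
      intro a ha b hb
      have ha' := (Finset.mem_filter.1 ha).2
      have hb' := (Finset.mem_filter.1 hb).2
      have : (M : ℤ) ∣ (a : ℤ) - b := by
        have := dvd_sub ha' hb'
        simpa using this
      have := (Nat.modEq_iff_dvd (n := M) (a := b) (b := a)).2 this
      exact this.symm
    have hc2 : D2.card ≤ X / M + 1 := by
      apply card_le_of_mod_eq hsub2
      intro a ha b hb
      have ha' := (Finset.mem_filter.1 ha).2
      have hb' := (Finset.mem_filter.1 hb).2
      have : (M : ℤ) ∣ (a : ℤ) - b := by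
        have := dvd_sub ha' hb'
        simpa using this
      have := (Nat.modEq_iff_dvd (n := M) (a := b) (b := a)).2 this
      exact this.symm
    calc A.card ≤ (D1 ∪ D2).card := Finset.card_le_card hsub
      _ ≤ D1.card + D2.card := Finset.card_union_le _ _
      _ ≤ 2 * (X / M + 1) := by omega



set_option maxHeartbeats 1600000 in
lemma gap {k b n n' m m' : ℕ} (hk1 : 1 ≤ k) (hk3 : k ≤ 3) (hb : k ^ 2 < 4 * b)
    (hn1 : 1 ≤ n) (hlt : n < n') (h1 : n ^ 2 + k = b * m ^ 2) (h2 : n' ^ 2 + k = b * m' ^ 2) :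
    2 * n ^ 14 ≤ n' ^ 14 := by
  have hb1 : 1 ≤ b := by nlinarith
  have e1 : ((n : ℤ)) ^ 2 + (k : ℤ) = (b : ℤ) * (m : ℤ) ^ 2 := by exact_mod_cast h1
  have e2 : ((n' : ℤ)) ^ 2 + (k : ℤ) = (b : ℤ) * (m' : ℤ) ^ 2 := by exact_mod_cast h2
  have hNpos : (1 : ℤ) ≤ (n : ℤ) := by exact_mod_cast hn1
  have hNlt : (n : ℤ) < (n' : ℤ) := by exact_mod_cast hlt
  have hKpos : (1 : ℤ) ≤ (k : ℤ) := by exact_mod_cast hk1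
  have hK3 : (k : ℤ) ≤ 3 := by exact_mod_cast hk3
  have hK9 : (k : ℤ) ^ 2 ≤ 9 := by nlinarith
  have hBpos : (1 : ℤ) ≤ (b : ℤ) := by exact_mod_cast hb1
  have hbK : (k : ℤ) ^ 2 < 4 * (b : ℤ) := by exact_mod_cast hb
  have hMpos : (0 : ℤ) ≤ (m : ℤ) := by positivity
  have hM'pos : (0 : ℤ) ≤ (m' : ℤ) := by positivity
  set N : ℤ := (n : ℤ)
  set N' : ℤ := (n' : ℤ)
  set Mm : ℤ := (m : ℤ)
  set Mm' : ℤ := (m' : ℤ)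
  set B : ℤ := (b : ℤ)
  set K : ℤ := (k : ℤ)
  -- Step 1 : N * Mm' < N' * Mm
  have key0 : B * ((N' * Mm) ^ 2 - (N * Mm') ^ 2) = K * (N' ^ 2 - N ^ 2) := by
    linear_combination (-(N' ^ 2) : ℤ) * e1 + ((N ^ 2 : ℤ)) * e2
  have hNN : N ^ 2 < N' ^ 2 := by nlinarith
  have hRHS : (0:ℤ) < K * (N' ^ 2 - N ^ 2) := mul_pos (by linarith) (by linarith)
  have hsqlt : (N * Mm') ^ 2 < (N' * Mm) ^ 2 := by
    by_contra hcon
    push_neg at hcon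
    have hdn : (N' * Mm) ^ 2 - (N * Mm') ^ 2 ≤ 0 := by linarith
    have := mul_nonpos_of_nonneg_of_nonpos (by linarith : (0:ℤ) ≤ B) hdn
    linarith [key0]
  have hstep1 : N * Mm' < N' * Mm := by
    have hnn : (0:ℤ) ≤ N' * Mm := mul_nonneg (by linarith) hMpos
    exact lt_of_pow_lt_pow_left₀ 2 hnn hsqlt
  -- Step 4 : B * (N'*Mm + N*Mm') ≤ K * N'^2
  have hd1 : 1 ≤ N' * Mm - N * Mm' := by
    have := Int.add_one_le_iff.mpr hstep1
    linarith
  have hident : B * (N' * Mm - N * Mm') * (N' * Mm + N * Mm') = K * (N' ^ 2 - N ^ 2) := by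
    linear_combination key0
  have hsumpos : 0 ≤ N' * Mm + N * Mm' := by positivity
  have hstep4 : B * (N' * Mm + N * Mm') ≤ K * N' ^ 2 := by
    have hx : 0 ≤ B * (N' * Mm + N * Mm') * ((N' * Mm - N * Mm') - 1) :=
      mul_nonneg (mul_nonneg (by linarith) hsumpos) (by linarith)
    have hy : 0 ≤ K * N ^ 2 := mul_nonneg (by linarith) (by positivity)
    have hz : B * (N' * Mm - N * Mm') * (N' * Mm + N * Mm')
        = B * (N' * Mm + N * Mm') + B * (N' * Mm + N * Mm') * ((N' * Mm - N * Mm') - 1) := by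
      ring
    have hw : K * (N' ^ 2 - N ^ 2) = K * N' ^ 2 - K * N ^ 2 := by ring
    linarith [hident, hx, hy, hz, hw]
  -- Step 5 : N * N' < B * Mm * Mm'
  have hQid : (B * (Mm * Mm')) ^ 2 = (N ^ 2 + K) * (N' ^ 2 + K) := by
    linear_combination (-(N' ^ 2 + K)) * e1 + (-(B * Mm ^ 2)) * e2
  have hstep5 : N * N' < B * (Mm * Mm') := by
    have hexpand : (N ^ 2 + K) * (N' ^ 2 + K) = N ^ 2 * N' ^ 2 + K * N' ^ 2 + K * N ^ 2 + K ^ 2 := by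
      ring
    have hsq : (N * N') ^ 2 < (B * (Mm * Mm')) ^ 2 := by
      have t1 : 0 ≤ K * N' ^ 2 := mul_nonneg (by linarith) (by positivity)
      have t2 : 0 ≤ K * N ^ 2 := mul_nonneg (by linarith) (by positivity)
      have t3 : (0:ℤ) < K ^ 2 := by positivity
      have t4 : (N * N') ^ 2 = N ^ 2 * N' ^ 2 := by ring
      linarith [hQid, hexpand]
    have hbmm : (0:ℤ) ≤ B * (Mm * Mm') := mul_nonneg (by linarith) (mul_nonneg hMpos hM'pos)
    exact lt_of_pow_lt_pow_left₀ 2 hbmm hsq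
  have hmm' : N * N' + 1 ≤ B * (Mm * Mm') := Int.add_one_le_iff.mpr hstep5
  have hNN'pos : (0:ℤ) < N * N' := mul_pos (by linarith) (by linarith)
  -- Step 7
  have ha : (0:ℤ) ≤ B * (N' * Mm + N * Mm') := mul_nonneg (by linarith) hsumpos
  have hsq4 : (B * (N' * Mm + N * Mm')) ^ 2 ≤ (K * N' ^ 2) ^ 2 :=
    pow_le_pow_left₀ ha hstep4 2
  have h5 : (0:ℤ) ≤ 4 * B * (N * N') * (B * (Mm * Mm') - N * N') := by
    apply mul_nonneg
    · apply mul_nonneg (by linarith) (by linarith)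
    · linarith
  have hid2 : (B * (N' * Mm + N * Mm')) ^ 2
      = 4 * B * (N ^ 2 * N' ^ 2) + (B * (N' * Mm - N * Mm')) ^ 2
        + 4 * B * (N * N') * (B * (Mm * Mm') - N * N') := by ring
  have hstep7 : 4 * B * (N ^ 2 * N' ^ 2) ≤ K ^ 2 * N' ^ 4 := by
    have e4 : (K * N' ^ 2) ^ 2 = K ^ 2 * N' ^ 4 := by ring
    linarith [hsq4, hid2, sq_nonneg (B * (N' * Mm - N * Mm')), h5, e4]
  -- Step 8 : 10 * N^2 ≤ 9 * N'^2
  have hN2 : (0:ℤ) < N' ^ 2 := by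
    have hN'pos : (0:ℤ) < N' := by linarith
    positivity
  have h1 : (4 * B * N ^ 2) * N' ^ 2 ≤ (K ^ 2 * N' ^ 2) * N' ^ 2 := by
    have q1 : (4 * B * N ^ 2) * N' ^ 2 = 4 * B * (N ^ 2 * N' ^ 2) := by ring
    have q2 : (K ^ 2 * N' ^ 2) * N' ^ 2 = K ^ 2 * N' ^ 4 := by ring
    linarith [hstep7]
  have h2 : 4 * B * N ^ 2 ≤ K ^ 2 * N' ^ 2 := le_of_mul_le_mul_right h1 hN2
  have h3 : (K ^ 2 + 1) * N ^ 2 ≤ K ^ 2 * N' ^ 2 := by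
    have : (K ^ 2 + 1) * N ^ 2 ≤ (4 * B) * N ^ 2 := by
      apply mul_le_mul_of_nonneg_right (by linarith) (by positivity)
    linarith
  have h4 : (10 * N ^ 2) * K ^ 2 ≤ (9 * N' ^ 2) * K ^ 2 := by
    have t1 : (0:ℤ) ≤ (9 - K ^ 2) * N ^ 2 :=
      mul_nonneg (by linarith) (by positivity)
    linarith [h3, t1]
  have hstep8 : 10 * N ^ 2 ≤ 9 * N' ^ 2 :=
    le_of_mul_le_mul_right h4 (by positivity)
  -- Step 9 : conclude
  have h7 : (10 * N ^ 2) ^ 7 ≤ (9 * N' ^ 2) ^ 7 :=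
    pow_le_pow_left₀ (by positivity) hstep8 7
  have hexp : (10 : ℤ) ^ 7 * N ^ 14 ≤ 9 ^ 7 * N' ^ 14 := by
    have q1 : (10 * N ^ 2) ^ 7 = (10:ℤ) ^ 7 * N ^ 14 := by ring
    have q2 : (9 * N' ^ 2) ^ 7 = (9:ℤ) ^ 7 * N' ^ 14 := by ring
    linarith [h7]
  have hNn : (0 : ℤ) ≤ N ^ 14 := by positivity
  have h8 : (9:ℤ) ^ 7 * (2 * N ^ 14) ≤ 9 ^ 7 * N' ^ 14 := by
    have t1 : (0:ℤ) ≤ ((10:ℤ) ^ 7 - 2 * 9 ^ 7) * N ^ 14 :=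
      mul_nonneg (by norm_num) hNn
    linarith [hexp, t1]
  have hfin : 2 * N ^ 14 ≤ N' ^ 14 :=
    le_of_mul_le_mul_left h8 (by norm_num)
  have hfin2 : (2 : ℤ) * (n : ℤ) ^ 14 ≤ (n' : ℤ) ^ 14 := hfin
  exact_mod_cast hfin2
lemma card_Cb_le {X k b : ℕ} [inst : DecidablePred fun n : ℕ => ∃ m : ℕ, n ^ 2 + k = b * m ^ 2]
    (hX : 1 ≤ X) (hk1 : 1 ≤ k) (hk3 : k ≤ 3) (hb1 : 1 ≤ b) :
    (((Finset.Icc 1 X).filter (fun n : ℕ => ∃ m : ℕ, n ^ 2 + k = b * m ^ 2)).card)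
      ≤ 14 * Nat.log 2 X + 14 := by
  set C := (Finset.Icc 1 X).filter (fun n : ℕ => ∃ m : ℕ, n ^ 2 + k = b * m ^ 2) with hC
  by_cases hbk : k ^ 2 < 4 * b
  · -- gap case : inject via n ↦ log2 (n^14)
    have key : C.card ≤ (Finset.range (14 * Nat.log 2 X + 14)).card := by
      apply Finset.card_le_card_of_injOn (fun n => Nat.log 2 (n ^ 14))
      · intro a ha
        rw [hC, Finset.mem_coe, Finset.mem_filter, Finset.mem_Icc] at ha
        simp only [Finset.mem_coe, Finset.mem_range]
        have h1 : a ^ 14 ≤ X ^ 14 := Nat.pow_le_pow_left ha.1.2 14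
        have h2 : X ^ 14 < 2 ^ (14 * Nat.log 2 X + 14) := by
          have hX2 : X < 2 ^ (Nat.log 2 X + 1) := Nat.lt_pow_succ_log_self (by norm_num) X
          calc X ^ 14 < (2 ^ (Nat.log 2 X + 1)) ^ 14 :=
                Nat.pow_lt_pow_left hX2 (by norm_num)
            _ = 2 ^ (14 * Nat.log 2 X + 14) := by rw [← pow_mul]; ring_nf
        have h3 : a ^ 14 ≠ 0 := by
          have := ha.1.1; positivity
        exact Nat.log_lt_of_lt_pow h3 (lt_of_le_of_lt h1 h2)
      · intro a ha b' hb' hab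
        simp only at hab
        by_contra hne
        -- wlog via cases
        have main : ∀ x y : ℕ, x ∈ C → y ∈ C → x < y →
            Nat.log 2 (x ^ 14) < Nat.log 2 (y ^ 14) := by
          intro x y hx hy hxy
          rw [hC, Finset.mem_filter, Finset.mem_Icc] at hx hy
          obtain ⟨⟨hx1, hxX⟩, mx, hmx⟩ := hx
          obtain ⟨⟨hy1, hyX⟩, my, hmy⟩ := hy
          have hgap := gap hk1 hk3 hbk hx1 hxy hmx hmy
          have hx14 : x ^ 14 ≠ 0 := by positivity
          calc Nat.log 2 (x ^ 14) < Nat.log 2 (x ^ 14) + 1 := Nat.lt_succ_self _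
            _ = Nat.log 2 (x ^ 14 * 2) := (Nat.log_mul_base (by norm_num) hx14).symm
            _ ≤ Nat.log 2 (y ^ 14) := Nat.log_mono_right (by omega)
        rcases Nat.lt_trichotomy a b' with h | h | h
        · exact absurd hab (Nat.ne_of_lt (main a b' ha hb' h))
        · exact hne h
        · exact absurd hab.symm (Nat.ne_of_lt (main b' a hb' ha h))
    simpa using key
  · -- exceptional small cases
    have hcases : (k = 2 ∧ b = 1) ∨ (k = 3 ∧ b = 1) ∨ (k = 3 ∧ b = 2) := by
      have h1 : k = 1 ∨ k = 2 ∨ k = 3 := by omega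
      rcases h1 with h | h | h <;> rw [h] at hbk <;> norm_num at hbk <;> omega
    have hone : ∀ (hk2 : k ≤ 3) (hbb : b = 1), C.card ≤ 1 := by
      intro hk2 hbb
      rw [Finset.card_le_one]
      have hmem : ∀ x ∈ C, x = 1 := by
        intro x hx
        rw [hC, Finset.mem_filter, Finset.mem_Icc] at hx
        obtain ⟨⟨hx1, hxX⟩, m, hm⟩ := hx
        rw [hbb, one_mul] at hm
        have hlt : x ^ 2 < m ^ 2 := by omega
        have hxm : x < m := by
          exact lt_of_pow_lt_pow_left₀ 2 (by positivity) hlt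
        have : (x + 1) ^ 2 ≤ m ^ 2 := Nat.pow_le_pow_left hxm 2
        have hexp : (x + 1) ^ 2 = x ^ 2 + 2 * x + 1 := by ring
        omega
      intro a ha b'' hb''
      rw [hmem a ha, hmem b'' hb'']
    rcases hcases with ⟨hk2, hbb⟩ | ⟨hk2, hbb⟩ | ⟨hk2, hbb⟩
    · exact le_trans (hone (by omega) hbb) (by omega)
    · exact le_trans (hone (by omega) hbb) (by omega)
    · -- k = 3, b = 2 : empty by mod 8
      have : C = ∅ := by
        rw [hC, Finset.filter_eq_empty_iff]
        intro n hn
        rintro ⟨m, hm⟩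
        rw [hk2, hbb] at hm
        have hm' : n * n + 3 = 2 * (m * m) := by
          have : n ^ 2 = n * n := by ring
          have hmm : m ^ 2 = m * m := by ring
          rw [this, hmm] at hm
          exact hm
        have e1 : n * n % 8 = (n % 8) * (n % 8) % 8 := Nat.mul_mod n n 8
        have e2 : m * m % 8 = (m % 8) * (m % 8) % 8 := Nat.mul_mod m m 8
        have b1 : n % 8 < 8 := Nat.mod_lt _ (by norm_num)
        have b2 : m % 8 < 8 := Nat.mod_lt _ (by norm_num)
        interval_cases h1 : n % 8 <;> interval_cases h2 : m % 8 <;> omega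
      rw [this]
      simp



lemma telescope (N : ℕ) : ∑ j ∈ Finset.Icc 1 N, (1 : ℝ) / (j * (j + 1)) = 1 - 1 / (N + 1) := by
  induction N with
  | zero => simp
  | succ n ih =>
    rw [← Finset.insert_Icc_right_eq_Icc_add_one (by omega : 1 ≤ n + 1)]
    rw [Finset.sum_insert (by simp)]
    rw [ih]
    have h1 : ((n : ℝ) + 1) ≠ 0 := by positivity
    have h2 : ((n : ℝ) + 2) ≠ 0 := by positivity
    push_cast
    field_simp
    ring

lemma sum_primes_le {P : Finset ℕ} (h : ∀ p ∈ P, 3 ≤ p ∧ p % 2 = 1) :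
    ∑ p ∈ P, (1 : ℝ) / (p : ℝ) ^ 2 ≤ 1 / 4 := by
  classical
  set g : ℕ → ℝ := fun j => (1 : ℝ) / 4 * (1 / ((j : ℝ) * ((j : ℝ) + 1))) with hg
  have hstep : ∑ p ∈ P, (1 : ℝ) / (p : ℝ) ^ 2 ≤ ∑ p ∈ P, g (p / 2) := by
    apply Finset.sum_le_sum
    intro p hp
    obtain ⟨hp3, hpodd⟩ := h p hp
    have hpj : p = 2 * (p / 2) + 1 := by omega
    have hj1 : 1 ≤ p / 2 := by omega
    set j : ℕ := p / 2
    have hjpos : (0 : ℝ) < (j : ℝ) := by exact_mod_cast hj1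
    have hle : (4 : ℝ) * ((j : ℝ) * ((j : ℝ) + 1)) ≤ ((p : ℝ)) ^ 2 := by
      have hlhs : ((p : ℝ)) = ((2 * j + 1 : ℕ) : ℝ) := by rw [← hpj]
      rw [hlhs]
      push_cast
      nlinarith [hjpos]
    calc (1 : ℝ) / (p : ℝ) ^ 2 ≤ 1 / (4 * ((j : ℝ) * ((j : ℝ) + 1))) :=
          one_div_le_one_div_of_le (by positivity) hle
      _ = g j := by rw [hg]; field_simp
  have himg : ∑ p ∈ P, g (p / 2) = ∑ j ∈ P.image (fun p => p / 2), g j := by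
    rw [Finset.sum_image]
    intro x hx y hy hxy
    obtain ⟨hx3, hxodd⟩ := h x hx
    obtain ⟨hy3, hyodd⟩ := h y hy
    beta_reduce at hxy
    omega
  have hsub : P.image (fun p => p / 2) ⊆ Finset.Icc 1 (P.sup (fun p => p / 2)) := by
    intro j hj
    rw [Finset.mem_image] at hj
    obtain ⟨p, hp, rfl⟩ := hj
    obtain ⟨hp3, _⟩ := h p hp
    rw [Finset.mem_Icc]
    refine ⟨by omega, Finset.le_sup (f := fun p => p / 2) hp⟩
  have hgnonneg : ∀ j : ℕ, 0 ≤ g j := by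
    intro j
    rcases Nat.eq_zero_or_pos j with rfl | hjpos
    · simp [hg]
    · have : (0:ℝ) < (j:ℝ) := by exact_mod_cast hjpos
      rw [hg]
      positivity
  have hmono : ∑ j ∈ P.image (fun p => p / 2), g j
      ≤ ∑ j ∈ Finset.Icc 1 (P.sup (fun p => p / 2)), g j :=
    Finset.sum_le_sum_of_subset_of_nonneg hsub (fun j _ _ => hgnonneg j)
  have hfin : ∑ j ∈ Finset.Icc 1 (P.sup (fun p => p / 2)), g j ≤ 1 / 4 := by
    have heq : ∑ j ∈ Finset.Icc 1 (P.sup (fun p => p / 2)), g j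
        = 1 / 4 * ∑ j ∈ Finset.Icc 1 (P.sup (fun p => p / 2)), (1:ℝ) / ((j:ℝ) * ((j:ℝ) + 1)) := by
      rw [Finset.mul_sum]
    rw [heq, telescope]
    have : (0:ℝ) < ((P.sup (fun p => p / 2) : ℕ) : ℝ) + 1 := by positivity
    have h3 : (0:ℝ) ≤ 1 / (((P.sup (fun p => p / 2) : ℕ) : ℝ) + 1) := by positivity
    nlinarith
  calc ∑ p ∈ P, (1 : ℝ) / (p : ℝ) ^ 2 ≤ ∑ p ∈ P, g (p / 2) := hstep
    _ = ∑ j ∈ P.image (fun p => p / 2), g j := himg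
    _ ≤ ∑ j ∈ Finset.Icc 1 (P.sup (fun p => p / 2)), g j := hmono
    _ ≤ 1 / 4 := hfin

lemma pow4_le_two_pow {L : ℕ} (hL : 16 ≤ L) : L ^ 4 ≤ 2 ^ L := by
  induction L with
  | zero => omega
  | succ n ih =>
    rcases Nat.lt_or_ge n 16 with h | h
    · have : n = 15 := by omega
      subst this
      norm_num
    · have ihn := ih (by omega)
      have hstep : (n + 1) ^ 4 ≤ 2 * n ^ 4 := by
        have e1 : 16 * n ^ 3 ≤ n ^ 4 := by
          have := Nat.mul_le_mul_right (n ^ 3) h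
          calc 16 * n ^ 3 ≤ n * n ^ 3 := this
            _ = n ^ 4 := by ring
        have e2 : n ^ 2 ≤ n ^ 3 := Nat.pow_le_pow_right (by omega) (by omega)
        have e3 : n ≤ n ^ 3 := by
          calc n = n ^ 1 := (pow_one n).symm
            _ ≤ n ^ 3 := Nat.pow_le_pow_right (by omega) (by omega)
        have e4 : 1 ≤ n ^ 3 := Nat.one_le_iff_ne_zero.2 (by positivity)
        have hexp : (n + 1) ^ 4 = n ^ 4 + 4 * n ^ 3 + 6 * n ^ 2 + 4 * n + 1 := by ring
        linarith
      calc (n + 1) ^ 4 ≤ 2 * n ^ 4 := hstep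
        _ ≤ 2 * 2 ^ n := by omega
        _ = 2 ^ (n + 1) := by ring


end SqfEstMain

open SqfEstMain in
theorem squarefree_near_square_positive_lower_density (k : ℕ)
    (hk : k ∈ ({1, 2, 3} : Finset ℕ)) :
    ∃ c : ℝ, 0 < c ∧ ∃ X₀ : ℕ, ∀ X : ℕ, X₀ ≤ X →
      c * X ≤ (((Finset.Icc 1 X).filter (fun n => Squarefree (n ^ 2 + k))).card : ℝ) := by
  have hk123 : k = 1 ∨ k = 2 ∨ k = 3 := by
    simp only [Finset.mem_insert, Finset.mem_singleton] at hk
    tauto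
  have hk1 : 1 ≤ k := by omega
  have hk3 : k ≤ 3 := by omega
  refine ⟨1 / 16, by norm_num, 2 ^ 100, fun X hX => ?_⟩
  set Good := (Finset.Icc 1 X).filter (fun n => Squarefree (n ^ 2 + k)) with hGood
  classical
  set L := Nat.log 2 X with hL
  set s := Nat.sqrt X with hs
  set T := Nat.sqrt (X * s) with hT
  -- basic size facts
  have hX1 : 1 ≤ X := le_trans (by norm_num) hX
  have hL100 : 100 ≤ L := by
    have h1 : Nat.log 2 (2 ^ 100) ≤ L := Nat.log_mono_right hX
    rwa [Nat.log_pow (by norm_num)] at h1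
  have hL4 : L ^ 4 ≤ X :=
    le_trans (pow4_le_two_pow (by omega)) (Nat.pow_log_le_self 2 (by omega))
  have hss : s * s ≤ X := Nat.sqrt_le X
  have hXs1 : X ≤ s * s + 2 * s := by
    have h1 := Nat.lt_succ_sqrt X
    have h2 : Nat.succ (Nat.sqrt X) * Nat.succ (Nat.sqrt X)
        = Nat.sqrt X * Nat.sqrt X + 2 * Nat.sqrt X + 1 := by
      simp only [Nat.succ_eq_add_one]
      ring
    rw [hs]
    omega
  have hs50 : 2 ^ 50 ≤ s := by
    rw [hs]
    apply Nat.le_sqrt.2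
    calc (2 : ℕ) ^ 50 * 2 ^ 50 = 2 ^ 100 := by norm_num
      _ ≤ X := hX
  have hs8 : 8 ≤ s := le_trans (by norm_num) hs50
  have hL2s : L ^ 2 ≤ s := by
    rw [hs]
    apply Nat.le_sqrt.2
    calc L ^ 2 * L ^ 2 = L ^ 4 := by ring
      _ ≤ X := hL4
  have hTT : T * T ≤ X * s := Nat.sqrt_le (X * s)
  -- numeric bounds
  have hTX : 128 * T ≤ X := by
    have h4 : (128 * T) ^ 4 ≤ X ^ 4 := by
      calc (128 * T) ^ 4 = 2 ^ 28 * ((T * T) * (T * T)) := by ring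
        _ ≤ 2 ^ 28 * ((X * s) * (X * s)) :=
            Nat.mul_le_mul_left _ (Nat.mul_le_mul hTT hTT)
        _ = 2 ^ 28 * ((X * X) * (s * s)) := by ring
        _ ≤ 2 ^ 28 * ((X * X) * X) :=
            Nat.mul_le_mul_left _ (Nat.mul_le_mul_left _ hss)
        _ ≤ X * ((X * X) * X) :=
            Nat.mul_le_mul_right _ (le_trans (by norm_num) hX)
        _ = X ^ 4 := by ring
    by_contra hcon
    push_neg at hcon
    have := Nat.pow_lt_pow_left hcon (n := 4) (by norm_num)
    omega
  have hsLX : 64 * ((s + 8) * (14 * L + 14)) ≤ X := by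
    have ha : 64 * ((s + 8) * (14 * L + 14)) ≤ 3584 * (s * L) := by
      have h1 : (s + 8) * (14 * L + 14) ≤ (2 * s) * (28 * L) :=
        Nat.mul_le_mul (by omega) (by omega)
      calc 64 * ((s + 8) * (14 * L + 14)) ≤ 64 * ((2 * s) * (28 * L)) :=
            Nat.mul_le_mul_left _ h1
        _ = 3584 * (s * L) := by ring
    have hb : 3584 ^ 2 * s ≤ X := by
      have hb4 : (3584 ^ 2 * s) * (3584 ^ 2 * s) ≤ X * X := by
        calc (3584 ^ 2 * s) * (3584 ^ 2 * s) = 3584 ^ 4 * (s * s) := by ring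
          _ ≤ 3584 ^ 4 * X := Nat.mul_le_mul_left _ hss
          _ ≤ X * X := Nat.mul_le_mul_right _ (le_trans (by norm_num) hX)
      by_contra hcon
      push_neg at hcon
      have := Nat.mul_self_lt_mul_self hcon
      omega
    have hc : (3584 * (s * L)) * (3584 * (s * L)) ≤ X * X := by
      calc (3584 * (s * L)) * (3584 * (s * L)) = 3584 ^ 2 * ((s * s) * (L * L)) := by ring
        _ ≤ 3584 ^ 2 * (X * s) := by
            apply Nat.mul_le_mul_left
            have hLL : L * L ≤ s := by
              have : L * L = L ^ 2 := by ring
              omega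
            exact Nat.mul_le_mul hss hLL
        _ = X * (3584 ^ 2 * s) := by ring
        _ ≤ X * X := Nat.mul_le_mul_left _ hb
    have hd : 3584 * (s * L) ≤ X := by
      by_contra hcon
      push_neg at hcon
      have := Nat.mul_self_lt_mul_self hcon
      omega
    omega
  -- the sets
  set R := (Finset.Icc 1 X).filter (fun n => n % 4 = 2) with hR
  set Bad := R.filter (fun n => ¬ Squarefree (n ^ 2 + k)) with hBad
  set P := (Finset.Icc 3 T).filter Nat.Prime with hP
  set A : ℕ → Finset ℕ :=
    fun p => (Finset.Icc 1 X).filter (fun n => n % 4 = 2 ∧ p ^ 2 ∣ n ^ 2 + k) with hA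
  set C : ℕ → Finset ℕ :=
    fun b => (Finset.Icc 1 X).filter (fun n : ℕ => ∃ m : ℕ, n ^ 2 + k = b * m ^ 2) with hC
  -- R is large
  have hRlow : (X + 2) / 4 ≤ R.card := by
    have key : (Finset.range ((X + 2) / 4)).card ≤ R.card := by
      apply Finset.card_le_card_of_injOn (fun t => 4 * t + 2)
      · intro t ht
        simp only [Finset.mem_coe, Finset.mem_range] at ht
        rw [hR, Finset.mem_coe, Finset.mem_filter, Finset.mem_Icc]
        beta_reduce
        omega
      · intro a _ b _ hab
        simp only at hab
        omega
    simpa using key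
  -- R splits into Good and Bad
  have hRsplit : R.card ≤ Good.card + Bad.card := by
    have hsub : R ⊆ Good ∪ Bad := by
      intro n hn
      by_cases hsq : Squarefree (n ^ 2 + k)
      · apply Finset.mem_union_left
        rw [hGood, Finset.mem_filter]
        rw [hR, Finset.mem_filter] at hn
        exact ⟨hn.1, hsq⟩
      · apply Finset.mem_union_right
        rw [hBad, Finset.mem_filter]
        exact ⟨hn, hsq⟩
    calc R.card ≤ (Good ∪ Bad).card := Finset.card_le_card hsub
      _ ≤ Good.card + Bad.card := Finset.card_union_le _ _
  -- Bad is covered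
  have hBadsub : Bad ⊆ P.biUnion A ∪ (Finset.Icc 1 (s + 8)).biUnion C := by
    intro n hn
    rw [hBad, Finset.mem_filter, hR, Finset.mem_filter, Finset.mem_Icc] at hn
    obtain ⟨⟨⟨hn1, hnX⟩, hn4⟩, hnsq⟩ := hn
    rw [Nat.squarefree_iff_prime_squarefree] at hnsq
    push_neg at hnsq
    obtain ⟨p, hpPr, hpd⟩ := hnsq
    have hpp : p.Prime := by first | exact hpPr | exact Nat.prime_iff.mpr hpPr
    have hp2 : p ≠ 2 := by
      rintro rfl
      have h4 : (4 : ℕ) ∣ n ^ 2 + k := by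
        have : (2 : ℕ) * 2 = 4 := by norm_num
        rwa [this] at hpd
      obtain ⟨u, hu⟩ : ∃ u, n = 2 * u := ⟨n / 2, by omega⟩
      have hnsq2 : n ^ 2 = 4 * u ^ 2 := by rw [hu]; ring
      omega
    have hp3 : 3 ≤ p := by
      have := hpp.two_le
      omega
    have hpd2 : p ^ 2 ∣ n ^ 2 + k := by rwa [pow_two]
    by_cases hsmall : p * p ≤ X * s
    · apply Finset.mem_union_left
      apply Finset.mem_biUnion.2
      refine ⟨p, ?_, ?_⟩
      · rw [hP, Finset.mem_filter, Finset.mem_Icc]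
        exact ⟨⟨hp3, by rw [hT]; exact Nat.le_sqrt.2 hsmall⟩, hpp⟩
      · rw [hA]
        simp only
        rw [Finset.mem_filter, Finset.mem_Icc]
        exact ⟨⟨hn1, hnX⟩, hn4, hpd2⟩
    · push_neg at hsmall
      set b := (n ^ 2 + k) / (p * p) with hb
      have heq : b * (p * p) = n ^ 2 + k := Nat.div_mul_cancel hpd
      have hb1 : 1 ≤ b := by
        rcases Nat.eq_zero_or_pos b with hb0 | h
        · rw [hb0] at heq
          simp at heq
          omega
        · exact h
      have hbB : b ≤ s + 8 := by
        have e2 : n ^ 2 + k ≤ X * X + 3 := by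
          have h1 : n ^ 2 ≤ X ^ 2 := Nat.pow_le_pow_left hnX 2
          have h2 : X ^ 2 = X * X := by ring
          omega
        have m1 : X * X ≤ X * (s * s + 2 * s) := Nat.mul_le_mul_left X hXs1
        have e3 : X * X + 3 ≤ (s + 8) * (X * s + 1) := by
          have expand : (s + 8) * (X * s + 1) = X * s * s + 8 * (X * s) + s + 8 := by ring
          have m2 : X * (s * s + 2 * s) = X * s * s + 2 * (X * s) := by ring
          omega
        have e4 : b * (X * s + 1) ≤ b * (p * p) :=
          Nat.mul_le_mul_left b (by omega)
        have e5 : b * (X * s + 1) ≤ (s + 8) * (X * s + 1) := by omega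
        exact Nat.le_of_mul_le_mul_right e5 (by omega)
      apply Finset.mem_union_right
      apply Finset.mem_biUnion.2
      refine ⟨b, Finset.mem_Icc.2 ⟨hb1, hbB⟩, ?_⟩
      rw [hC]
      simp only
      rw [Finset.mem_filter, Finset.mem_Icc]
      exact ⟨⟨hn1, hnX⟩, ⟨p, by rw [← heq]; ring⟩⟩
  -- cardinality bound for Bad (natural numbers)
  have hBadCard : Bad.card ≤ (∑ p ∈ P, 2 * (X / (4 * p ^ 2) + 1)) + (s + 8) * (14 * L + 14) := by
    calc Bad.card ≤ (P.biUnion A ∪ (Finset.Icc 1 (s + 8)).biUnion C).card :=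
          Finset.card_le_card hBadsub
      _ ≤ (P.biUnion A).card + ((Finset.Icc 1 (s + 8)).biUnion C).card :=
          Finset.card_union_le _ _
      _ ≤ (∑ p ∈ P, (A p).card) + (∑ b ∈ Finset.Icc 1 (s + 8), (C b).card) :=
          Nat.add_le_add Finset.card_biUnion_le Finset.card_biUnion_le
      _ ≤ (∑ p ∈ P, 2 * (X / (4 * p ^ 2) + 1)) + (∑ _b ∈ Finset.Icc 1 (s + 8), (14 * L + 14)) := by
          apply Nat.add_le_add
          · apply Finset.sum_le_sum
            intro p hp
            rw [hP, Finset.mem_filter, Finset.mem_Icc] at hp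
            exact card_Ap_le hp.2 (by omega) hk1 hk3
          · apply Finset.sum_le_sum
            intro b hb
            rw [Finset.mem_Icc] at hb
            exact card_Cb_le hX1 hk1 hk3 hb.1
      _ = (∑ p ∈ P, 2 * (X / (4 * p ^ 2) + 1)) + (s + 8) * (14 * L + 14) := by
          rw [Finset.sum_const, Nat.card_Icc, smul_eq_mul]
          norm_num
  -- P facts
  have hPodd : ∀ p ∈ P, 3 ≤ p ∧ p % 2 = 1 := by
    intro p hp
    rw [hP, Finset.mem_filter, Finset.mem_Icc] at hp
    obtain ⟨⟨hp3, _⟩, hpp⟩ := hp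
    refine ⟨hp3, ?_⟩
    obtain ⟨t, ht⟩ := hpp.odd_of_ne_two (by omega)
    omega
  have hPcard : P.card ≤ T := by
    calc P.card ≤ (Finset.Icc 3 T).card := Finset.card_le_card (Finset.filter_subset _ _)
      _ = T + 1 - 3 := Nat.card_Icc 3 T
      _ ≤ T := by omega
  -- real bound on the small-prime sum
  have hsmallsum : ((∑ p ∈ P, 2 * (X / (4 * p ^ 2) + 1) : ℕ) : ℝ)
      ≤ (X : ℝ) / 8 + 2 * T := by
    have step1 : ((∑ p ∈ P, 2 * (X / (4 * p ^ 2) + 1) : ℕ) : ℝ)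
        = ∑ p ∈ P, (2 * ((X / (4 * p ^ 2) : ℕ) : ℝ) + 2) := by
      rw [Nat.cast_sum]
      apply Finset.sum_congr rfl
      intro p _
      push_cast
      ring
    rw [step1]
    have step2 : ∑ p ∈ P, (2 * ((X / (4 * p ^ 2) : ℕ) : ℝ) + 2)
        ≤ ∑ p ∈ P, (2 * ((X : ℝ) / (4 * (p : ℝ) ^ 2)) + 2) := by
      apply Finset.sum_le_sum
      intro p hp
      have h1 : ((X / (4 * p ^ 2) : ℕ) : ℝ) ≤ (X : ℝ) / ((4 * p ^ 2 : ℕ) : ℝ) :=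
        Nat.cast_div_le
      have h2 : ((4 * p ^ 2 : ℕ) : ℝ) = 4 * (p : ℝ) ^ 2 := by push_cast; ring
      rw [h2] at h1
      linarith
    have step3 : ∑ p ∈ P, (2 * ((X : ℝ) / (4 * (p : ℝ) ^ 2)) + 2)
        = (X : ℝ) / 2 * (∑ p ∈ P, (1 : ℝ) / (p : ℝ) ^ 2) + 2 * P.card := by
      rw [Finset.sum_add_distrib, Finset.sum_const]
      rw [Finset.mul_sum]
      congr 1
      · apply Finset.sum_congr rfl
        intro p _
        ring
      · simp [mul_comm]
    have step4 : (X : ℝ) / 2 * (∑ p ∈ P, (1 : ℝ) / (p : ℝ) ^ 2) ≤ (X : ℝ) / 2 * (1 / 4) := by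
      apply mul_le_mul_of_nonneg_left (sum_primes_le hPodd) (by positivity)
    have step5 : (2 : ℝ) * P.card ≤ 2 * T := by
      have : (P.card : ℝ) ≤ (T : ℝ) := by exact_mod_cast hPcard
      linarith
    calc ∑ p ∈ P, (2 * ((X / (4 * p ^ 2) : ℕ) : ℝ) + 2)
        ≤ ∑ p ∈ P, (2 * ((X : ℝ) / (4 * (p : ℝ) ^ 2)) + 2) := step2
      _ = (X : ℝ) / 2 * (∑ p ∈ P, (1 : ℝ) / (p : ℝ) ^ 2) + 2 * P.card := step3
      _ ≤ (X : ℝ) / 2 * (1 / 4) + 2 * T := by linarith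
      _ = (X : ℝ) / 8 + 2 * T := by ring
  -- final real assembly
  have hX8 : (8 : ℕ) ≤ X := le_trans (by norm_num) hX
  have hXR : (8 : ℝ) ≤ (X : ℝ) := by exact_mod_cast hX8
  have hBadR : (Bad.card : ℝ) ≤ (X : ℝ) / 8 + 2 * T + ((s : ℝ) + 8) * (14 * L + 14) := by
    have h1 : (Bad.card : ℝ)
        ≤ ((∑ p ∈ P, 2 * (X / (4 * p ^ 2) + 1) : ℕ) : ℝ) + ((s + 8) * (14 * L + 14) : ℕ) := by
      exact_mod_cast hBadCard
    have h2 : (((s + 8) * (14 * L + 14) : ℕ) : ℝ) = ((s : ℝ) + 8) * (14 * L + 14) := by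
      push_cast
      ring
    rw [h2] at h1
    linarith
  have hTle : (2 : ℝ) * T ≤ (X : ℝ) / 64 := by
    have : ((128 * T : ℕ) : ℝ) ≤ (X : ℝ) := by exact_mod_cast hTX
    push_cast at this
    linarith
  have hsLle : ((s : ℝ) + 8) * (14 * L + 14) ≤ (X : ℝ) / 64 := by
    have : ((64 * ((s + 8) * (14 * L + 14)) : ℕ) : ℝ) ≤ (X : ℝ) := by exact_mod_cast hsLX
    push_cast at this
    linarith
  have hRlowR : ((X : ℝ) - 1) / 4 ≤ (R.card : ℝ) := by
    have h1 : 4 * ((X + 2) / 4) + 3 ≥ X + 2 := by omega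
    have h2 : ((X + 2) / 4 : ℕ) ≤ R.card := hRlow
    have h3 : ((((X + 2) / 4) : ℕ) : ℝ) ≤ (R.card : ℝ) := by exact_mod_cast h2
    have h4 : ((X : ℝ) + 2) - 3 ≤ 4 * ((((X + 2) / 4) : ℕ) : ℝ) := by
      have : ((4 * ((X + 2) / 4) + 3 : ℕ) : ℝ) ≥ ((X + 2 : ℕ) : ℝ) := by exact_mod_cast h1
      push_cast at this
      linarith
    linarith
  have hsplitR : (R.card : ℝ) ≤ (Good.card : ℝ) + (Bad.card : ℝ) := by exact_mod_cast hRsplit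
  calc (1 : ℝ) / 16 * X ≤ ((X : ℝ) - 1) / 4 - ((X : ℝ) / 8 + (X : ℝ) / 64 + (X : ℝ) / 64) := by
        linarith [hXR]
    _ ≤ (R.card : ℝ) - (Bad.card : ℝ) := by linarith
    _ ≤ (Good.card : ℝ) := by linarith
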